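/- Let A be a Hopf algebra over a field k with bijective antipode S, let M be an A-bimodule and σ a k-algebra automorphism of A. Then for m ∈ M the following are equivalent: (i) Σ S⁻¹(a₂) m σ(a₁) = ε(a) m for all a ∈ A; (ii) am = mσ(a) for all a ∈ A. In other words, the space of right A-module homomorphisms from the trivial right module k to the right adjoint module (^{S⁻²}M^σ)' is identified with the σ-twisted centralizer Z^σ_A(M) = {m ∈ M : am = mσ(a) for all a}. -/

import Mathlib

/-!
STATEMENT 18: Let `A` be a Hopf algebra over `k` with bijective antipode `S`, `M` an
`A`-bimodule (a module over `A ⊗ Aᵐᵒᵖ`, central over `k`) and `σ` a `k`-algebra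
automorphism of `A`.  For `m ∈ M` the following are equivalent:
(i)  `Σ S⁻¹(a₂) m σ(a₁) = ε(a) m` for all `a ∈ A`;
(ii) `a m = m σ(a)` for all `a ∈ A`.
That is, `Hom_{A^op}(k, (^{S⁻²}M^σ)')` is identified with the `σ`-twisted
centralizer `Z^σ_A(M)`.
-/

open TensorProduct MulOpposite

noncomputable section

open Coalgebra HopfAlgebra

noncomputable section ConvAux
variable {R : Type} [CommRing R] {C : Type} [AddCommGroup C] [Module R C] [Coalgebra R C]
  {B : Type} [Ring B] [Algebra R B]

/-- Convolution product on `Hom(C, B)`. -/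
def conv (f g : C →ₗ[R] B) : C →ₗ[R] B :=
  LinearMap.mul' R B ∘ₗ TensorProduct.map f g ∘ₗ Coalgebra.comul

lemma conv_apply_repr (f g : C →ₗ[R] B) {c : C} {ι : Type*} (r : Coalgebra.Repr R c ι) :
    conv f g c = ∑ i ∈ r.index, f (r.left i) * g (r.right i) := by
  simp only [conv, LinearMap.comp_apply, ← r.eq, map_sum, TensorProduct.map_tmul,
    LinearMap.mul'_apply]

end ConvAux

noncomputable section ConvAux2
variable {R : Type} [CommRing R] {C : Type} [AddCommGroup C] [Module R C] [Coalgebra R C]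
  {B : Type} [Ring B] [Algebra R B]

lemma conv_unit_left (f : C →ₗ[R] B) :
    conv (Algebra.linearMap R B ∘ₗ Coalgebra.counit) f = f := by
  ext c
  rw [conv_apply_repr _ _ (ℛ R c)]
  have h := Coalgebra.sum_counit_tmul_eq (ℛ R c)
  apply_fun (TensorProduct.lid R C) at h
  simp only [map_sum, TensorProduct.lid_tmul, one_smul] at h
  calc ∑ i ∈ (ℛ R c).index,
        (Algebra.linearMap R B ∘ₗ Coalgebra.counit) ((ℛ R c).left i) * f ((ℛ R c).right i)
      = ∑ i ∈ (ℛ R c).index, Coalgebra.counit (R := R) ((ℛ R c).left i) • f ((ℛ R c).right i) := by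
        simp [Algebra.smul_def]
    _ = f (∑ i ∈ (ℛ R c).index, Coalgebra.counit (R := R) ((ℛ R c).left i) • (ℛ R c).right i) := by
        simp [map_sum]
    _ = f c := by rw [h]

lemma conv_unit_right (f : C →ₗ[R] B) :
    conv f (Algebra.linearMap R B ∘ₗ Coalgebra.counit) = f := by
  ext c
  rw [conv_apply_repr _ _ (ℛ R c)]
  have h := Coalgebra.sum_tmul_counit_eq (ℛ R c)
  apply_fun (TensorProduct.rid R C) at h
  simp only [map_sum, TensorProduct.rid_tmul, one_smul] at h
  calc ∑ i ∈ (ℛ R c).index,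
        f ((ℛ R c).left i) * (Algebra.linearMap R B ∘ₗ Coalgebra.counit) ((ℛ R c).right i)
      = ∑ i ∈ (ℛ R c).index, Coalgebra.counit (R := R) ((ℛ R c).right i) • f ((ℛ R c).left i) := by
        refine Finset.sum_congr rfl fun i _ => ?_
        rw [LinearMap.comp_apply, Algebra.linearMap_apply, ← Algebra.commutes, ← Algebra.smul_def]
    _ = f (∑ i ∈ (ℛ R c).index, Coalgebra.counit (R := R) ((ℛ R c).right i) • (ℛ R c).left i) := by
        simp [map_sum]
    _ = f c := by rw [h]

end ConvAux2

noncomputable section ConvAux3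
variable {R : Type} [CommRing R] {C : Type} [AddCommGroup C] [Module R C] [Coalgebra R C]
  {B : Type} [Ring B] [Algebra R B]

lemma conv_assoc (f g h : C →ₗ[R] B) : conv (conv f g) h = conv f (conv g h) := by
  ext c
  have key := Coalgebra.sum_map_tmul_tmul_eq (R := R) f g h c (repr := ℛ R c)
    (a₁ := fun i => ℛ R ((ℛ R c).left i)) (a₂ := fun i => ℛ R ((ℛ R c).right i))
  apply_fun (LinearMap.mul' R B ∘ₗ LinearMap.lTensor B (LinearMap.mul' R B)) at key
  simp only [map_sum, LinearMap.comp_apply, LinearMap.lTensor_tmul,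
    LinearMap.mul'_apply] at key
  rw [conv_apply_repr (conv f g) h (ℛ R c), conv_apply_repr f (conv g h) (ℛ R c)]
  calc ∑ i ∈ (ℛ R c).index, conv f g ((ℛ R c).left i) * h ((ℛ R c).right i)
      = ∑ i ∈ (ℛ R c).index, ∑ j ∈ (ℛ R ((ℛ R c).left i)).index,
          f ((ℛ R ((ℛ R c).left i)).left j) *
            (g ((ℛ R ((ℛ R c).left i)).right j) * h ((ℛ R c).right i)) := by
        refine Finset.sum_congr rfl fun i _ => ?_
        rw [conv_apply_repr f g (ℛ R ((ℛ R c).left i)), Finset.sum_mul]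
        simp [mul_assoc]
    _ = ∑ i ∈ (ℛ R c).index, ∑ j ∈ (ℛ R ((ℛ R c).right i)).index,
          f ((ℛ R c).left i) *
            (g ((ℛ R ((ℛ R c).right i)).left j) * h ((ℛ R ((ℛ R c).right i)).right j)) :=
        key.symm
    _ = ∑ i ∈ (ℛ R c).index, f ((ℛ R c).left i) * conv g h ((ℛ R c).right i) := by
        refine Finset.sum_congr rfl fun i _ => ?_
        rw [conv_apply_repr g h (ℛ R ((ℛ R c).right i)), Finset.mul_sum]

end ConvAux3

noncomputable section HopfAux
variable {R : Type} [CommRing R] {A : Type} [Ring A] [HopfAlgebra R A]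

lemma antipode_one' : HopfAlgebra.antipode (R := R) (1 : A) = 1 := by
  have h := mul_antipode_rTensor_comul_apply (R := R) (A := A) (1 : A)
  simpa [Bialgebra.comul_one, Algebra.TensorProduct.one_def] using h

lemma comul_tmul_repr (x y : A) :
    Coalgebra.comul (R := R) (x ⊗ₜ[R] y) =
      ∑ i ∈ (ℛ R x).index, ∑ j ∈ (ℛ R y).index,
        ((ℛ R x).left i ⊗ₜ[R] (ℛ R y).left j) ⊗ₜ[R]
          ((ℛ R x).right i ⊗ₜ[R] (ℛ R y).right j) := by
  rw [TensorProduct.comul_tmul,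
    ← (ℛ R x).eq, ← (ℛ R y).eq, TensorProduct.sum_tmul]
  simp [TensorProduct.tmul_sum, TensorProduct.tensorTensorTensorComm_tmul]

lemma antipode_mul' (a b : A) :
    HopfAlgebra.antipode (R := R) (a * b) =
      HopfAlgebra.antipode (R := R) b * HopfAlgebra.antipode (R := R) a := by
  have hGμ : conv ((HopfAlgebra.antipode (R := R)) ∘ₗ (LinearMap.mul' R A))
      (LinearMap.mul' R A) = Algebra.linearMap R A ∘ₗ Coalgebra.counit := by
    apply TensorProduct.ext'
    intro x y
    have hc : Coalgebra.comul (R := R) (x * y) =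
        ∑ i ∈ (ℛ R x).index, ∑ j ∈ (ℛ R y).index,
          ((ℛ R x).left i * (ℛ R y).left j) ⊗ₜ[R]
            ((ℛ R x).right i * (ℛ R y).right j) := by
      rw [Bialgebra.comul_mul, ← (ℛ R x).eq, ← (ℛ R y).eq, Finset.sum_mul_sum]
      simp [Algebra.TensorProduct.tmul_mul_tmul]
    have hmain := mul_antipode_rTensor_comul_apply (R := R) (x * y)
    rw [hc] at hmain
    simp only [map_sum, LinearMap.rTensor_tmul, LinearMap.mul'_apply] at hmain
    rw [conv, LinearMap.comp_apply, LinearMap.comp_apply, comul_tmul_repr]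
    simp only [map_sum, TensorProduct.map_tmul, LinearMap.mul'_apply, LinearMap.comp_apply]
    rw [hmain]
    rw [TensorProduct.counit_def]
    simp [Bialgebra.counit_mul]
    exact Algebra.commutes _ _
  have hμF : conv (LinearMap.mul' R A)
      ((LinearMap.mul' R A) ∘ₗ
        TensorProduct.map (HopfAlgebra.antipode (R := R)) (HopfAlgebra.antipode (R := R)) ∘ₗ
        (TensorProduct.comm R A A).toLinearMap) =
      Algebra.linearMap R A ∘ₗ Coalgebra.counit := by
    apply TensorProduct.ext'
    intro x y
    rw [conv, LinearMap.comp_apply, LinearMap.comp_apply, comul_tmul_repr]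
    simp only [map_sum, TensorProduct.map_tmul, LinearMap.mul'_apply, LinearMap.comp_apply,
      LinearEquiv.coe_coe, TensorProduct.comm_tmul]
    have key : ∀ i ∈ (ℛ R x).index, ∑ j ∈ (ℛ R y).index,
        ((ℛ R x).left i * (ℛ R y).left j) *
          (HopfAlgebra.antipode (R := R) ((ℛ R y).right j) *
            HopfAlgebra.antipode (R := R) ((ℛ R x).right i)) =
        Coalgebra.counit (R := R) y •
          ((ℛ R x).left i * HopfAlgebra.antipode (R := R) ((ℛ R x).right i)) := by
      intro i _
      calc ∑ j ∈ (ℛ R y).index, ((ℛ R x).left i * (ℛ R y).left j) *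
            (HopfAlgebra.antipode (R := R) ((ℛ R y).right j) *
              HopfAlgebra.antipode (R := R) ((ℛ R x).right i))
          = (ℛ R x).left i *
              (∑ j ∈ (ℛ R y).index,
                (ℛ R y).left j * HopfAlgebra.antipode (R := R) ((ℛ R y).right j)) *
              HopfAlgebra.antipode (R := R) ((ℛ R x).right i) := by
            rw [Finset.mul_sum, Finset.sum_mul]
            simp [mul_assoc]
        _ = _ := by
            rw [sum_mul_antipode_eq_smul (ℛ R y), mul_smul_comm, smul_mul_assoc, mul_one]
    rw [Finset.sum_congr rfl key, ← Finset.smul_sum, sum_mul_antipode_eq_smul (ℛ R x)]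
    rw [TensorProduct.counit_def]
    simp only [LinearMap.comp_apply, TensorProduct.map_tmul, LinearMap.mul'_apply,
      Algebra.linearMap_apply, smul_smul]
    rw [Algebra.algebraMap_eq_smul_one, mul_comm]
    simp [mul_comm]
  have hGF : (HopfAlgebra.antipode (R := R)) ∘ₗ (LinearMap.mul' R A) =
      (LinearMap.mul' R A) ∘ₗ
        TensorProduct.map (HopfAlgebra.antipode (R := R)) (HopfAlgebra.antipode (R := R)) ∘ₗ
        (TensorProduct.comm R A A).toLinearMap := by
    calc (HopfAlgebra.antipode (R := R)) ∘ₗ (LinearMap.mul' R A)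
        = conv ((HopfAlgebra.antipode (R := R)) ∘ₗ (LinearMap.mul' R A))
            (Algebra.linearMap R A ∘ₗ Coalgebra.counit) := (conv_unit_right _).symm
      _ = conv ((HopfAlgebra.antipode (R := R)) ∘ₗ (LinearMap.mul' R A))
            (conv (LinearMap.mul' R A) _) := by rw [hμF]
      _ = conv (conv ((HopfAlgebra.antipode (R := R)) ∘ₗ (LinearMap.mul' R A))
            (LinearMap.mul' R A)) _ := (conv_assoc _ _ _).symm
      _ = conv (Algebra.linearMap R A ∘ₗ Coalgebra.counit) _ := by rw [hGμ]
      _ = _ := conv_unit_left _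
  have := congr($hGF (a ⊗ₜ[R] b))
  simpa using this

end HopfAux

noncomputable section KeyAux
variable {R : Type} [CommRing R] {A : Type} [Ring A] [HopfAlgebra R A]

lemma key_one (Si : A →ₗ[R] A)
    (hSi₁ : ∀ a : A, Si (HopfAlgebra.antipode (R := R) a) = a)
    (hSi₂ : ∀ a : A, HopfAlgebra.antipode (R := R) (Si a) = a)
    {a : A} {ι : Type*} (r : Coalgebra.Repr R a ι) :
    ∑ i ∈ r.index, Si (r.right i) * r.left i = Coalgebra.counit (R := R) a • 1 := by
  have hinj : Function.Injective (HopfAlgebra.antipode (R := R) (A := A)) :=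
    Function.LeftInverse.injective hSi₁
  apply hinj
  rw [map_sum, map_smul, antipode_one']
  calc ∑ i ∈ r.index, HopfAlgebra.antipode (R := R) (Si (r.right i) * r.left i)
      = ∑ i ∈ r.index, HopfAlgebra.antipode (R := R) (r.left i) * r.right i := by
        refine Finset.sum_congr rfl fun i _ => ?_
        rw [antipode_mul', hSi₂]
    _ = Coalgebra.counit (R := R) a • 1 := sum_antipode_mul_eq_smul r

lemma key_two (Si : A →ₗ[R] A)
    (hSi₁ : ∀ a : A, Si (HopfAlgebra.antipode (R := R) a) = a)
    (hSi₂ : ∀ a : A, HopfAlgebra.antipode (R := R) (Si a) = a)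
    {a : A} {ι : Type*} (r : Coalgebra.Repr R a ι) :
    ∑ i ∈ r.index, r.right i * Si (r.left i) = Coalgebra.counit (R := R) a • 1 := by
  have hinj : Function.Injective (HopfAlgebra.antipode (R := R) (A := A)) :=
    Function.LeftInverse.injective hSi₁
  apply hinj
  rw [map_sum, map_smul, antipode_one']
  calc ∑ i ∈ r.index, HopfAlgebra.antipode (R := R) (r.right i * Si (r.left i))
      = ∑ i ∈ r.index, r.left i * HopfAlgebra.antipode (R := R) (r.right i) := by
        refine Finset.sum_congr rfl fun i _ => ?_
        rw [antipode_mul', hSi₂]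
    _ = Coalgebra.counit (R := R) a • 1 := sum_mul_antipode_eq_smul r

end KeyAux

variable (k A : Type) [Field k] [Ring A] [HopfAlgebra k A]

/-- The linear map `a ↦ Σ S⁻¹(a₂) ⊗ (σ a₁)ᵒᵖ : A → A ⊗ Aᵐᵒᵖ`; acting by it on
`m ∈ M` gives `Σ S⁻¹(a₂) m σ(a₁)`, the right action of `a` on `(^{S⁻²}M^σ)'`. -/
def radMap (σ : A ≃ₐ[k] A) (Si : A →ₗ[k] A) : A →ₗ[k] A ⊗[k] Aᵐᵒᵖ :=
  (TensorProduct.map Si ((opLinearEquiv k).toLinearMap ∘ₗ σ.toLinearMap)) ∘ₗ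
    (TensorProduct.comm k A A).toLinearMap ∘ₗ Coalgebra.comul

theorem radjoint_invariants_eq_twisted_center (M : Type) [AddCommGroup M] [Module k M]
    [Module (A ⊗[k] Aᵐᵒᵖ) M] [IsScalarTower k (A ⊗[k] Aᵐᵒᵖ) M]
    (σ : A ≃ₐ[k] A) (Si : A →ₗ[k] A)
    (hSi₁ : ∀ a : A, Si (HopfAlgebra.antipode (R := k) a) = a)
    (hSi₂ : ∀ a : A, HopfAlgebra.antipode (R := k) (Si a) = a) :
    ∀ m : M,
      (∀ a : A, radMap k A σ Si a • m = Coalgebra.counit (R := k) a • m) ↔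
      (∀ a : A, (a ⊗ₜ[k] (1 : Aᵐᵒᵖ)) • m = ((1 : A) ⊗ₜ[k] op (σ a)) • m) := by
  intro m
  have hsmul : ∀ (c : k) (s : A ⊗[k] Aᵐᵒᵖ) (x : M), s • (c • x) = c • (s • x) := by
    intro c s x
    rw [← algebraMap_smul (A ⊗[k] Aᵐᵒᵖ) c x, ← mul_smul, ← Algebra.commutes, mul_smul,
      algebraMap_smul]
  have hrad : ∀ b : A, radMap k A σ Si b =
      ∑ i ∈ (ℛ k b).index, Si ((ℛ k b).right i) ⊗ₜ[k] op (σ ((ℛ k b).left i)) := by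
    intro b
    rw [radMap, LinearMap.comp_apply, LinearMap.comp_apply, ← (ℛ k b).eq]
    simp
  have hsum₁ : ∀ a : A, ∑ i ∈ (ℛ k a).index,
      Coalgebra.counit (R := k) ((ℛ k a).right i) • (ℛ k a).left i = a := by
    intro a
    calc ∑ i ∈ (ℛ k a).index,
          Coalgebra.counit (R := k) ((ℛ k a).right i) • (ℛ k a).left i
        = TensorProduct.rid k A
            (∑ i ∈ (ℛ k a).index, (ℛ k a).left i ⊗ₜ[k]
              Coalgebra.counit (R := k) ((ℛ k a).right i)) := by
          rw [map_sum]; simp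
      _ = TensorProduct.rid k A (a ⊗ₜ[k] 1) := by rw [Coalgebra.sum_tmul_counit_eq]
      _ = a := by simp
  have hsum₂ : ∀ a : A, ∑ i ∈ (ℛ k a).index,
      Coalgebra.counit (R := k) ((ℛ k a).left i) • (ℛ k a).right i = a := by
    intro a
    calc ∑ i ∈ (ℛ k a).index,
          Coalgebra.counit (R := k) ((ℛ k a).left i) • (ℛ k a).right i
        = TensorProduct.lid k A
            (∑ i ∈ (ℛ k a).index, Coalgebra.counit (R := k) ((ℛ k a).left i) ⊗ₜ[k]
              (ℛ k a).right i) := by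
          rw [map_sum]; simp
      _ = TensorProduct.lid k A ((1 : k) ⊗ₜ[k] a) := by rw [Coalgebra.sum_counit_tmul_eq]
      _ = a := by simp
  constructor
  · intro hi a
    have key := Coalgebra.sum_tmul_tmul_eq (R := k) (ℛ k a)
      (fun i => ℛ k ((ℛ k a).left i)) (fun i => ℛ k ((ℛ k a).right i))
    set ψ : A ⊗[k] (A ⊗[k] A) →ₗ[k] A ⊗[k] Aᵐᵒᵖ :=
      TensorProduct.map
        (LinearMap.mul' k A ∘ₗ TensorProduct.map LinearMap.id Si ∘ₗ
          (TensorProduct.comm k A A).toLinearMap)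
        ((opLinearEquiv k).toLinearMap ∘ₗ σ.toLinearMap) ∘ₗ
        (TensorProduct.comm k A (A ⊗[k] A)).toLinearMap with hψ
    apply_fun ψ at key
    simp only [map_sum, hψ, LinearMap.comp_apply, LinearEquiv.coe_coe,
      TensorProduct.comm_tmul, TensorProduct.map_tmul, LinearMap.mul'_apply,
      LinearMap.id_coe, id_eq, AlgEquiv.toLinearMap_apply,
      MulOpposite.coe_opLinearEquiv] at key
    have hRHS : ∑ i ∈ (ℛ k a).index, ∑ j ∈ (ℛ k ((ℛ k a).right i)).index,
        ((ℛ k ((ℛ k a).right i)).right j * Si ((ℛ k ((ℛ k a).right i)).left j)) ⊗ₜ[k]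
          op (σ ((ℛ k a).left i)) = (1 : A) ⊗ₜ[k] op (σ a) := by
      calc ∑ i ∈ (ℛ k a).index, ∑ j ∈ (ℛ k ((ℛ k a).right i)).index,
            ((ℛ k ((ℛ k a).right i)).right j * Si ((ℛ k ((ℛ k a).right i)).left j)) ⊗ₜ[k]
              op (σ ((ℛ k a).left i))
          = ∑ i ∈ (ℛ k a).index,
              (Coalgebra.counit (R := k) ((ℛ k a).right i) • (1 : A)) ⊗ₜ[k]
                op (σ ((ℛ k a).left i)) := by
            refine Finset.sum_congr rfl fun i _ => ?_
            rw [← TensorProduct.sum_tmul, key_two Si hSi₁ hSi₂ (ℛ k ((ℛ k a).right i))]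
        _ = ∑ i ∈ (ℛ k a).index,
              (1 : A) ⊗ₜ[k] (Coalgebra.counit (R := k) ((ℛ k a).right i) •
                op (σ ((ℛ k a).left i))) := by
            refine Finset.sum_congr rfl fun i _ => ?_
            rw [TensorProduct.smul_tmul]
        _ = (1 : A) ⊗ₜ[k] (∑ i ∈ (ℛ k a).index,
              Coalgebra.counit (R := k) ((ℛ k a).right i) • op (σ ((ℛ k a).left i))) :=
            (TensorProduct.tmul_sum _ _ _).symm
        _ = (1 : A) ⊗ₜ[k] op (σ (∑ i ∈ (ℛ k a).index,
              Coalgebra.counit (R := k) ((ℛ k a).right i) • (ℛ k a).left i)) := by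
            congr 1
            simp [map_sum, map_smul]
        _ = (1 : A) ⊗ₜ[k] op (σ a) := by rw [hsum₁ a]
    have hX : (1 : A) ⊗ₜ[k] op (σ a) =
        ∑ i ∈ (ℛ k a).index, ∑ j ∈ (ℛ k ((ℛ k a).left i)).index,
          ((ℛ k a).right i * Si ((ℛ k ((ℛ k a).left i)).right j)) ⊗ₜ[k]
            op (σ ((ℛ k ((ℛ k a).left i)).left j)) := by
      rw [← hRHS, ← key]
    rw [hX, Finset.sum_smul]
    symm
    calc ∑ i ∈ (ℛ k a).index,
          (∑ j ∈ (ℛ k ((ℛ k a).left i)).index,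
            ((ℛ k a).right i * Si ((ℛ k ((ℛ k a).left i)).right j)) ⊗ₜ[k]
              op (σ ((ℛ k ((ℛ k a).left i)).left j))) • m
        = ∑ i ∈ (ℛ k a).index,
            Coalgebra.counit (R := k) ((ℛ k a).left i) •
              (((ℛ k a).right i ⊗ₜ[k] (1 : Aᵐᵒᵖ)) • m) := by
          refine Finset.sum_congr rfl fun i _ => ?_
          rw [Finset.sum_smul]
          calc ∑ j ∈ (ℛ k ((ℛ k a).left i)).index,
                (((ℛ k a).right i * Si ((ℛ k ((ℛ k a).left i)).right j)) ⊗ₜ[k]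
                  op (σ ((ℛ k ((ℛ k a).left i)).left j))) • m
              = ∑ j ∈ (ℛ k ((ℛ k a).left i)).index,
                  ((ℛ k a).right i ⊗ₜ[k] (1 : Aᵐᵒᵖ)) •
                    ((Si ((ℛ k ((ℛ k a).left i)).right j) ⊗ₜ[k]
                      op (σ ((ℛ k ((ℛ k a).left i)).left j))) • m) := by
                refine Finset.sum_congr rfl fun j _ => ?_
                rw [← mul_smul, Algebra.TensorProduct.tmul_mul_tmul, one_mul]
            _ = ((ℛ k a).right i ⊗ₜ[k] (1 : Aᵐᵒᵖ)) •
                  ((∑ j ∈ (ℛ k ((ℛ k a).left i)).index,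
                    Si ((ℛ k ((ℛ k a).left i)).right j) ⊗ₜ[k]
                      op (σ ((ℛ k ((ℛ k a).left i)).left j))) • m) := by
                rw [← Finset.smul_sum, Finset.sum_smul]
            _ = Coalgebra.counit (R := k) ((ℛ k a).left i) •
                  (((ℛ k a).right i ⊗ₜ[k] (1 : Aᵐᵒᵖ)) • m) := by
                rw [← hrad ((ℛ k a).left i), hi ((ℛ k a).left i), hsmul]
      _ = ∑ i ∈ (ℛ k a).index,
            (((Coalgebra.counit (R := k) ((ℛ k a).left i) • (ℛ k a).right i) ⊗ₜ[k]
              (1 : Aᵐᵒᵖ)) • m) := by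
          refine Finset.sum_congr rfl fun i _ => ?_
          rw [← TensorProduct.smul_tmul', smul_assoc]
      _ = ((∑ i ∈ (ℛ k a).index,
            Coalgebra.counit (R := k) ((ℛ k a).left i) • (ℛ k a).right i) ⊗ₜ[k]
              (1 : Aᵐᵒᵖ)) • m := by
          rw [TensorProduct.sum_tmul, Finset.sum_smul]
      _ = (a ⊗ₜ[k] (1 : Aᵐᵒᵖ)) • m := by rw [hsum₂ a]
  · intro hii a
    rw [hrad a, Finset.sum_smul]
    calc ∑ i ∈ (ℛ k a).index,
          (Si ((ℛ k a).right i) ⊗ₜ[k] op (σ ((ℛ k a).left i))) • m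
        = ∑ i ∈ (ℛ k a).index,
            ((Si ((ℛ k a).right i) * (ℛ k a).left i) ⊗ₜ[k] (1 : Aᵐᵒᵖ)) • m := by
          refine Finset.sum_congr rfl fun i _ => ?_
          have h1 : Si ((ℛ k a).right i) ⊗ₜ[k] op (σ ((ℛ k a).left i)) =
              (Si ((ℛ k a).right i) ⊗ₜ[k] (1 : Aᵐᵒᵖ)) *
                ((1 : A) ⊗ₜ[k] op (σ ((ℛ k a).left i))) := by
            rw [Algebra.TensorProduct.tmul_mul_tmul, mul_one, one_mul]
          rw [h1, mul_smul, ← hii, ← mul_smul, Algebra.TensorProduct.tmul_mul_tmul,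
            mul_one]
      _ = ((∑ i ∈ (ℛ k a).index, Si ((ℛ k a).right i) * (ℛ k a).left i) ⊗ₜ[k]
            (1 : Aᵐᵒᵖ)) • m := by
          rw [TensorProduct.sum_tmul, Finset.sum_smul]
      _ = Coalgebra.counit (R := k) a • m := by
          rw [key_one Si hSi₁ hSi₂ (ℛ k a), ← TensorProduct.smul_tmul',
            ← Algebra.TensorProduct.one_def, smul_assoc, one_smul]

end
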